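/- Deligne's filtration is decreasing: with M̃ a regular holonomic D-module on a disc with coordinate x, localized along x=0, filtered by a good filtration F^•M and V-filtration V^•M, and F_Del^γ M̃ := ∑_{k≥0} (∂_x + x^{-2})^k x^{-1} F^{[γ]+k} V^{γ-[γ]} M (where [γ] is the smallest integer ≥ γ), we have F_Del^{γ'} M̃ ⊆ F_Del^γ M̃ whenever γ' ≥ γ. -/
import Mathlib


/-- Deligne's filtration is decreasing.  We work on the localized module
`M̃` (a `ℂ`-module `N` on which `x` acts invertibly and `∂_x = dx` acts with
`[dx, x] = 1`), with combined data `FV p β = F^p M ∩ V^β M` satisfying the usual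
properties of a good filtration and of the V-filtration.  With `⌈γ⌉` the smallest
integer `≥ γ` and
`F_Del^γ M̃ = ∑_{k≥0} (∂_x + x⁻²)^k x⁻¹ (F^{⌈γ⌉+k} V^{γ-⌈γ⌉} M)`,
one has `F_Del^{γ'} ⊆ F_Del^γ` whenever `γ ≤ γ'`. -/
theorem stmt_11 {N : Type*} [AddCommGroup N] [Module ℂ N]
    (x : N ≃ₗ[ℂ] N) (dx : N →ₗ[ℂ] N)
    (hrel : dx ∘ₗ (x : N →ₗ[ℂ] N) - (x : N →ₗ[ℂ] N) ∘ₗ dx = LinearMap.id)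
    (FV : ℤ → ℝ → Submodule ℂ N)
    (hFdec : ∀ (p p' : ℤ) (β : ℝ), p ≤ p' → FV p' β ≤ FV p β)
    (hVdec : ∀ (p : ℤ) (β β' : ℝ), β ≤ β' → FV p β' ≤ FV p β)
    (hxFV : ∀ (p : ℤ) (β : ℝ), ∀ m ∈ FV p β, x m ∈ FV p (β + 1))
    (hdFV : ∀ (p : ℤ) (β : ℝ), ∀ m ∈ FV p β, dx m ∈ FV (p - 1) (β - 1))
    (Del : ℝ → Submodule ℂ N)
    (hDel : ∀ γ : ℝ, Del γ =
      ⨆ k : ℕ, Submodule.map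
        (((dx + (x.symm : N →ₗ[ℂ] N) ∘ₗ (x.symm : N →ₗ[ℂ] N)) ^ k)
          ∘ₗ (x.symm : N →ₗ[ℂ] N))
        (FV (⌈γ⌉ + k) (γ - (⌈γ⌉ : ℝ)))) :
    ∀ γ γ' : ℝ, γ ≤ γ' → Del γ' ≤ Del γ := by
  set D : N →ₗ[ℂ] N := dx + (x.symm : N →ₗ[ℂ] N) ∘ₗ (x.symm : N →ₗ[ℂ] N) with hD
  -- key pointwise identity: x⁻¹ v = D (x v) - dx (x v)
  have key : ∀ v : N, (x.symm : N →ₗ[ℂ] N) v = D (x v) - dx (x v) := by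
    intro v
    simp [hD, LinearMap.add_apply, LinearMap.comp_apply]
  -- same-ceiling case
  have same : ∀ γ γ' : ℝ, γ ≤ γ' → ⌈γ'⌉ = ⌈γ⌉ → Del γ' ≤ Del γ := by
    intro γ γ' hle hc
    rw [hDel, hDel, hc]
    refine iSup_le fun k => le_iSup_of_le k (Submodule.map_mono ?_)
    exact hVdec _ _ _ (by linarith)
  -- one-step case
  have step : ∀ γ γ' : ℝ, γ ≤ γ' → ⌈γ'⌉ = ⌈γ⌉ + 1 → Del γ' ≤ Del γ := by
    intro γ γ' hle hc
    rw [hDel, hDel]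
    refine iSup_le fun k => ?_
    rintro _ ⟨m, hm, rfl⟩
    have hcr : (⌈γ'⌉ : ℝ) = (⌈γ⌉ : ℝ) + 1 := by exact_mod_cast hc
    -- a : first piece
    have hxm : x m ∈ FV (⌈γ'⌉ + k) (γ' - ⌈γ'⌉ + 1) := hxFV _ _ _ hm
    have hxxm0 : x (x m) ∈ FV (⌈γ'⌉ + k) (γ' - ⌈γ'⌉ + 1 + 1) := hxFV _ _ _ hxm
    have hxxm : x (x m) ∈ FV (⌈γ⌉ + ((k + 1 : ℕ) : ℤ)) (γ - ⌈γ⌉) :=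
      hFdec (⌈γ⌉ + ((k + 1 : ℕ) : ℤ)) (⌈γ'⌉ + k) (γ - ⌈γ⌉) (by push_cast; omega)
        (hVdec (⌈γ'⌉ + k) (γ - ⌈γ⌉) (γ' - ⌈γ'⌉ + 1 + 1) (by rw [hcr]; linarith) hxxm0)
    have hdxm : dx (x m) ∈ FV (⌈γ'⌉ + k - 1) (γ' - ⌈γ'⌉ + 1 - 1) := hdFV _ _ _ hxm
    have hxdxm0 : x (dx (x m)) ∈ FV (⌈γ'⌉ + k - 1) (γ' - ⌈γ'⌉ + 1 - 1 + 1) := hxFV _ _ _ hdxm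
    have hxdxm : x (dx (x m)) ∈ FV (⌈γ⌉ + k) (γ - ⌈γ⌉) :=
      hFdec (⌈γ⌉ + k) (⌈γ'⌉ + k - 1) (γ - ⌈γ⌉) (by omega)
        (hVdec (⌈γ'⌉ + k - 1) (γ - ⌈γ⌉) (γ' - ⌈γ'⌉ + 1 - 1 + 1) (by rw [hcr]; linarith) hxdxm0)
    have ha : ((D ^ (k + 1)) ∘ₗ (x.symm : N →ₗ[ℂ] N)) (x (x m)) ∈
        ⨆ j : ℕ, Submodule.map ((D ^ j) ∘ₗ (x.symm : N →ₗ[ℂ] N)) (FV (⌈γ⌉ + j) (γ - ⌈γ⌉)) :=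
      Submodule.mem_iSup_of_mem (k + 1) (Submodule.mem_map_of_mem hxxm)
    have hb : ((D ^ k) ∘ₗ (x.symm : N →ₗ[ℂ] N)) (x (dx (x m))) ∈
        ⨆ j : ℕ, Submodule.map ((D ^ j) ∘ₗ (x.symm : N →ₗ[ℂ] N)) (FV (⌈γ⌉ + j) (γ - ⌈γ⌉)) :=
      Submodule.mem_iSup_of_mem k (Submodule.mem_map_of_mem hxdxm)
    have heq : ((D ^ k) ∘ₗ (x.symm : N →ₗ[ℂ] N)) m =
        ((D ^ (k + 1)) ∘ₗ (x.symm : N →ₗ[ℂ] N)) (x (x m))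
          - ((D ^ k) ∘ₗ (x.symm : N →ₗ[ℂ] N)) (x (dx (x m))) := by
      simp only [LinearMap.comp_apply, LinearEquiv.coe_coe, x.symm_apply_apply, pow_succ,
        Module.End.mul_apply, ← map_sub, ← key]
    rw [heq]
    exact Submodule.sub_mem _ ha hb
  -- general chain
  have main : ∀ n : ℕ, ∀ γ γ' : ℝ, γ ≤ γ' → ⌈γ'⌉ = ⌈γ⌉ + n → Del γ' ≤ Del γ := by
    intro n
    induction n with
    | zero => intro γ γ' hle hc; exact same γ γ' hle (by omega)
    | succ n ih =>
      intro γ γ' hle hc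
      set γ'' : ℝ := ((⌈γ'⌉ - 1 : ℤ) : ℝ) with hγ''
      have hcg'' : ⌈γ''⌉ = ⌈γ'⌉ - 1 := by rw [hγ'', Int.ceil_intCast]
      have h1 : γ'' ≤ γ' := by
        have := Int.ceil_lt_add_one γ'
        rw [hγ'']; push_cast; linarith
      have h2 : γ ≤ γ'' := by
        have := Int.le_ceil γ
        rw [hγ'']
        have : (⌈γ⌉ : ℝ) ≤ ((⌈γ'⌉ - 1 : ℤ) : ℝ) := by exact_mod_cast (by omega : ⌈γ⌉ ≤ ⌈γ'⌉ - 1)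
        linarith [Int.le_ceil γ]
      exact (step γ'' γ' h1 (by omega)).trans (ih γ γ'' h2 (by omega))
  intro γ γ' hle
  have hcc : ⌈γ⌉ ≤ ⌈γ'⌉ := Int.ceil_le_ceil hle
  exact main (⌈γ'⌉ - ⌈γ⌉).toNat γ γ' hle (by omega)
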